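/- Let H be the contraction hierarchy of a separator decomposition T, let X be a node of T with boundary B(X), and let l be the lowest-ranked vertex of B(X). Then for every b ∈ B(X), the edge (l, b) is in H (for b ≠ l), and consequently the CCH search space satisfies S(b) ⊆ S(l), so S(l) = ⋃_{b ∈ B(X)} S(b). -/

import Mathlib

/-- `anc parent Z X`: node `X` is a (weak) ancestor of node `Z`. -/
def anc {ι : Type*} (parent : ι → ι) : ι → ι → Prop :=
  Relation.ReflTransGen (fun a b => parent a = b)

/-- Vertex set of the subgraph `G_X` induced by the subtree rooted at `X`. -/
def subVerts {V ι : Type*} (parent : ι → ι) (bag : ι → Set V) (X : ι) : Set V :=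
  {v | ∃ Z, anc parent Z X ∧ v ∈ bag Z}

/-- The CCH search space `S(v)`: the set of ancestors of `v` (including `v`) in the
elimination tree given by the parent function `par` with root `root`. -/
def searchSpace {V : Type*} (par : V → V) (root : V) (v : V) : Set V :=
  {w | Relation.ReflTransGen (fun a b => a ≠ root ∧ b = par a) v w}

lemma anc_trans' {ι : Type*} {parent : ι → ι} {A B C : ι} (h1 : anc parent A B)
    (h2 : anc parent B C) : anc parent A C := Relation.ReflTransGen.trans h1 h2

lemma anc_iterate' {ι : Type*} (parent : ι → ι) (A : ι) :
    ∀ n, anc parent A (parent^[n] A)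
  | 0 => Relation.ReflTransGen.refl
  | (n+1) => by
      rw [Function.iterate_succ_apply']
      exact (anc_iterate' parent A n).tail rfl

lemma anc_exists' {ι : Type*} {parent : ι → ι} {A B : ι} (h : anc parent A B) :
    ∃ n, parent^[n] A = B := by
  induction h with
  | refl => exact ⟨0, rfl⟩
  | tail h1 h2 ih =>
      obtain ⟨n, hn⟩ := ih
      exact ⟨n + 1, by rw [Function.iterate_succ_apply', hn, h2]⟩

/-- Let `H` be the contraction hierarchy of a separator
decomposition, `X` a node with boundary `B(X)`, and `l` the lowest-ranked vertex of
`B(X)`.  Then for every `b ∈ B(X)` with `b ≠ l` the edge `(l, b)` is in `H`, and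
consequently `S(b) ⊆ S(l)`, so `S(l) = ⋃_{b ∈ B(X)} S(b)`. -/
theorem stmt5 {V ι : Type*} (G H : SimpleGraph V) (parent : ι → ι) (bag : ι → Set V)
    (rootNode : ι) (rank : V → ℕ) (hrank : Function.Injective rank)
    (hroot : ∀ Z, anc parent Z rootNode)
    (hantisymm : ∀ Y Z, anc parent Y Z → anc parent Z Y → Y = Z)
    (hdisj : ∀ Y Z, Y ≠ Z → Disjoint (bag Y) (bag Z))
    (hcover : ∀ v : V, ∃ Z, v ∈ bag Z)
    -- separator property: each node separates the subtrees of its distinct children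
    (hsep : ∀ Z Y₁ Y₂, parent Y₁ = Z → parent Y₂ = Z → Y₁ ≠ Y₂ →
      ∀ a ∈ subVerts parent bag Y₁, ∀ b ∈ subVerts parent bag Y₂, ¬ G.Adj a b)
    -- postorder numbering property
    (hpost : ∀ X Z, anc parent X Z → X ≠ Z →
      ∀ v ∈ subVerts parent bag X, ∀ w ∈ bag Z, rank v < rank w)
    -- characterization of the contraction hierarchy `H` built from `G` by rank
    (hH : ∀ a b : V, rank a < rank b →
      (H.Adj a b ↔ ∃ p : G.Walk a b, ∀ x ∈ p.support, x ≠ a → x ≠ b → rank x < rank a))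
    -- elimination tree of `H`: `par v` is the lowest-ranked higher `H`-neighbor
    (rootV : V) (hrootV : ∀ v, v ≠ rootV → rank v < rank rootV)
    (par : V → V)
    (hpar : ∀ v, v ≠ rootV → H.Adj v (par v) ∧ rank v < rank (par v) ∧
      ∀ w, H.Adj v w → rank v < rank w → rank (par v) ≤ rank w)
    (X : ι) (u : V)
    (hu : u ∈ subVerts parent bag X)
    (humax : ∀ v ∈ subVerts parent bag X, v ≠ u → rank v < rank u)
    -- `G_X` is connected
    (hconn : ∀ v ∈ subVerts parent bag X,
      ∃ p : G.Walk v u, ∀ x ∈ p.support, x ∈ subVerts parent bag X)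
    -- the boundary `B(X)` of `G_X`, and its lowest-ranked vertex `l`
    (B : Set V)
    (hB : B = {w | w ∉ subVerts parent bag X ∧ ∃ v ∈ subVerts parent bag X, G.Adj v w})
    (l : V) (hl : l ∈ B) (hlmin : ∀ b ∈ B, rank l ≤ rank b) :
    (∀ b ∈ B, b ≠ l → H.Adj l b ∧ rank l < rank b) ∧
    searchSpace par rootV l = ⋃ b ∈ B, searchSpace par rootV b := by
  classical
  -- Every boundary vertex has rank larger than every vertex of `G_X`.
  have key : ∀ w, w ∉ subVerts parent bag X →
      (∃ v ∈ subVerts parent bag X, G.Adj v w) →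
      ∀ v ∈ subVerts parent bag X, rank v < rank w := by
    intro w hw hadj
    obtain ⟨v0, hv0, hav0⟩ := hadj
    obtain ⟨Z, hZ⟩ := hcover w
    have hnZX : ¬ anc parent Z X := fun h => hw ⟨Z, h, hZ⟩
    obtain ⟨nX, hnX⟩ := anc_exists' (hroot X)
    have hex : ∃ m, anc parent Z (parent^[m] X) := ⟨nX, hnX ▸ hroot Z⟩
    set m := Nat.find hex with hmdef
    have hm : anc parent Z (parent^[m] X) := Nat.find_spec hex
    have hm0 : m ≠ 0 := by
      intro h
      apply hnZX
      simpa [h] using hm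
    obtain ⟨k, hk⟩ : ∃ k, m = k + 1 := ⟨m - 1, by omega⟩
    have hAW : parent (parent^[k] X) = parent^[m] X := by
      rw [hk, Function.iterate_succ_apply']
    have hnA : ¬ anc parent Z (parent^[k] X) := Nat.find_min hex (by omega)
    have hXZ : anc parent X Z ∧ X ≠ Z := by
      rcases eq_or_ne Z (parent^[m] X) with he | hne
      · constructor
        · exact (anc_iterate' parent X k).tail (he ▸ hAW)
        · rintro rfl
          exact hnZX Relation.ReflTransGen.refl
      · exfalso
        obtain ⟨n, hn⟩ := anc_exists' hm
        have hn0 : n ≠ 0 := by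
          intro h
          exact hne (by simpa [h] using hn)
        have hCW : parent (parent^[n-1] Z) = parent^[m] X := by
          rw [← hn]
          conv_rhs => rw [show n = (n-1) + 1 by omega]
          rw [Function.iterate_succ_apply']
        have hCA : parent^[n-1] Z ≠ parent^[k] X := by
          intro h
          exact hnA (h ▸ anc_iterate' parent Z (n-1))
        have hwC : w ∈ subVerts parent bag (parent^[n-1] Z) :=
          ⟨Z, anc_iterate' parent Z (n-1), hZ⟩
        have hv0A : v0 ∈ subVerts parent bag (parent^[k] X) := by
          obtain ⟨Y, hY1, hY2⟩ := hv0
          exact ⟨Y, anc_trans' hY1 (anc_iterate' parent X k), hY2⟩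
        exact hsep (parent^[m] X) _ _ hCW (by rw [hAW]) hCA w hwC v0 hv0A hav0.symm
    intro v hv
    exact hpost X Z hXZ.1 hXZ.2 v hv w hZ
  have hlB : l ∉ subVerts parent bag X ∧ ∃ v ∈ subVerts parent bag X, G.Adj v l := by
    rw [hB] at hl; exact hl
  have hBlow : ∀ b ∈ B, ∀ v ∈ subVerts parent bag X, rank v < rank b := by
    intro b hb
    rw [hB] at hb
    exact key b hb.1 hb.2
  -- Part 1: edges from `l` to other boundary vertices.
  have hedge : ∀ b ∈ B, b ≠ l → H.Adj l b ∧ rank l < rank b := by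
    intro b hb hbne
    have hrlt : rank l < rank b :=
      lt_of_le_of_ne (hlmin b hb) (fun h => hbne (hrank h).symm)
    obtain ⟨vl, hvl, havl⟩ := hlB.2
    have hbB : b ∉ subVerts parent bag X ∧ ∃ v ∈ subVerts parent bag X, G.Adj v b := by
      rw [hB] at hb; exact hb
    obtain ⟨vb, hvb, havb⟩ := hbB.2
    obtain ⟨pl, hpl⟩ := hconn vl hvl
    obtain ⟨pb, hpb⟩ := hconn vb hvb
    refine ⟨(hH l b hrlt).mpr ⟨SimpleGraph.Walk.cons havl.symm
      ((pl.append pb.reverse).append (SimpleGraph.Walk.cons havb SimpleGraph.Walk.nil)),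
      ?_⟩, hrlt⟩
    intro x hx hxl hxb
    have hxX : x ∈ subVerts parent bag X := by
      rw [SimpleGraph.Walk.support_cons, List.mem_cons] at hx
      rcases hx with rfl | hx
      · exact absurd rfl hxl
      rw [SimpleGraph.Walk.mem_support_append_iff,
        SimpleGraph.Walk.mem_support_append_iff] at hx
      rcases hx with (hx | hx) | hx
      · exact hpl x hx
      · rw [SimpleGraph.Walk.support_reverse, List.mem_reverse] at hx
        exact hpb x hx
      · simp only [SimpleGraph.Walk.support_cons, SimpleGraph.Walk.support_nil,
          List.mem_cons, List.mem_singleton] at hx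
        rcases hx with rfl | rfl | hx
        · exact hvb
        · exact absurd rfl hxb
        · exact absurd hx List.not_mem_nil
    exact hBlow l hl x hxX
  -- Climbing lemma: an `H`-edge to a higher-ranked vertex gives ancestry
  -- in the elimination tree.
  have climb : ∀ n v w, H.Adj v w → rank v < rank w → rank w - rank v ≤ n →
      Relation.ReflTransGen (fun a b => a ≠ rootV ∧ b = par a) v w := by
    intro n
    induction n with
    | zero => intro v w _ h1 h2; omega
    | succ n ih =>
      intro v w hvw hlt hle
      have hvroot : v ≠ rootV := by
        intro hveq
        have hwne : w ≠ rootV := by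
          intro hweq
          rw [hveq, hweq] at hlt
          omega
        have h1 := hrootV w hwne
        rw [hveq] at hlt
        omega
      obtain ⟨hHp, hltp, hmin⟩ := hpar v hvroot
      rcases eq_or_ne (par v) w with he | hne
      · exact Relation.ReflTransGen.single ⟨hvroot, he.symm⟩
      · have hpw : rank (par v) < rank w :=
          lt_of_le_of_ne (hmin w hvw hlt) (fun h => hne (hrank h))
        obtain ⟨p1, hp1⟩ := (hH v (par v) hltp).mp hHp
        obtain ⟨p2, hp2⟩ := (hH v w hlt).mp hvw
        have hadj : H.Adj (par v) w := by
          refine (hH (par v) w hpw).mpr ⟨p1.reverse.append p2, ?_⟩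
          intro x hx hxp hxw
          rw [SimpleGraph.Walk.mem_support_append_iff,
            SimpleGraph.Walk.support_reverse, List.mem_reverse] at hx
          rcases eq_or_ne x v with rfl | hxv
          · exact hltp
          rcases hx with hx | hx
          · exact lt_trans (hp1 x hx hxv hxp) hltp
          · exact lt_trans (hp2 x hx hxv hxw) hltp
        exact Relation.ReflTransGen.head ⟨hvroot, rfl⟩
          (ih (par v) w hadj hpw (by omega))
  refine ⟨hedge, ?_⟩
  ext x
  simp only [Set.mem_iUnion]
  constructor
  · intro hx
    exact ⟨l, hl, hx⟩
  · rintro ⟨b, hb, hx⟩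
    rcases eq_or_ne b l with rfl | hne
    · exact hx
    · obtain ⟨hHlb, hrlb⟩ := hedge b hb hne
      exact Relation.ReflTransGen.trans (climb _ l b hHlb hrlb le_rfl) hx
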